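/- Let n ≥ 1 and let p be a surjection with domain Fin n, with reverse p̄. Then for every function ε defined on the pairs (i,j) with i < j in Fin n and taking values in Bool: the sum, over all surjections o with domain Fin n that refine p̄ and satisfy sgn(o) = ε, of (−1)^{k(o)−n}, equals 1 if ε(i,j) = (p(i) ≤ p(j)) for all i < j, and equals 0 otherwise. (This is the coefficientwise form of the identity X(p)⁻¹ = Σ_{o refines p̄} (−1)^{k(o)−n} X(o), where X(o) = Π_{i<j} X_{ij}^{+1 if o(i)>o(j), −1 otherwise}.) -/

import Mathlib

open scoped Classical

/-- A surjection of size `n`: a surjective function from `Fin n` onto some `Fin k`. -/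
abbrev Surjs (n : ℕ) : Type :=
  {o : Σ k : Fin (n + 1), Fin n → Fin (k : ℕ) // Function.Surjective o.2}

namespace Surjs

variable {n : ℕ}

/-- The size `k(o)` of the image of the surjection. -/
def k (o : Surjs n) : ℕ := (o.1.1 : ℕ)

/-- The underlying function of the surjection. -/
def f (o : Surjs n) : Fin n → Fin o.k := o.1.2

/-- `o` refines `p` if `o x ≤ o y` implies `p x ≤ p y` for all `x, y`. -/
def Refines (o p : Surjs n) : Prop :=
  ∀ x y : Fin n, o.f x ≤ o.f y → p.f x ≤ p.f y

/-- The reverse surjection `p̄`, given by `p̄ i = (k - 1) - p i`. -/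
def rev (p : Surjs n) : Surjs n :=
  ⟨⟨p.1.1, fun i => (p.1.2 i).rev⟩, Fin.rev_involutive.surjective.comp p.2⟩

/-- The sign vector of a surjection: `sgn o i j = true` iff `o i > o j` (for `i < j`). -/
def sgn (o : Surjs n) (i j : Fin n) : Bool := decide (o.f j < o.f i)

end Surjs
namespace SurjsPf
open Surjs Finset Function

variable {n : ℕ}

lemma k_le (o : Surjs n) : o.k ≤ n := by
  have := Fintype.card_le_of_surjective o.f o.2
  simpa using this

theorem Surjs_ext {o o' : Surjs n} (hk : o.k = o'.k)
    (hf : ∀ i, (o.f i : ℕ) = (o'.f i : ℕ)) : o = o' := by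
  obtain ⟨⟨k1, f1⟩, h1⟩ := o
  obtain ⟨⟨k2, f2⟩, h2⟩ := o'
  simp only [Surjs.k] at hk
  have hkk : k1 = k2 := Fin.ext hk
  subst hkk
  apply Subtype.ext
  simp only [Sigma.mk.inj_iff, heq_eq_eq, true_and]
  funext i
  exact Fin.ext (hf i)

/-- the linearization order of `o` -/
def bef (o : Surjs n) (i j : Fin n) : Prop :=
  o.f i < o.f j ∨ (o.f i = o.f j ∧ i < j)

lemma bef_irrefl (o : Surjs n) (i : Fin n) : ¬ bef o i i := by
  simp [bef]

lemma bef_trans {o : Surjs n} {i j l : Fin n} (h1 : bef o i j) (h2 : bef o j l) :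
    bef o i l := by
  rcases h1 with h1 | ⟨h1, h1'⟩ <;> rcases h2 with h2 | ⟨h2, h2'⟩
  · exact Or.inl (h1.trans h2)
  · exact Or.inl (h2 ▸ h1)
  · exact Or.inl (h1 ▸ h2)
  · exact Or.inr ⟨h1.trans h2, h1'.trans h2'⟩

lemma bef_total {o : Surjs n} {i j : Fin n} (h : i ≠ j) : bef o i j ∨ bef o j i := by
  rcases lt_trichotomy (o.f i) (o.f j) with h1 | h1 | h1
  · exact Or.inl (Or.inl h1)
  · rcases lt_or_gt_of_ne h with h2 | h2
    · exact Or.inl (Or.inr ⟨h1, h2⟩)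
    · exact Or.inr (Or.inr ⟨h1.symm, h2⟩)
  · exact Or.inr (Or.inl h1)

lemma bef_asymm {o : Surjs n} {i j : Fin n} (h : bef o i j) : ¬ bef o j i :=
  fun h' => bef_irrefl o i (bef_trans h h')

lemma bef_le {o : Surjs n} {i j : Fin n} (h : bef o i j) : o.f i ≤ o.f j := by
  rcases h with h | ⟨h, _⟩
  · exact h.le
  · exact h.le

lemma bef_ne {o : Surjs n} {i j : Fin n} (h : bef o i j) : i ≠ j :=
  fun h' => bef_irrefl o i (h' ▸ h)

/-- the condition appearing in the summation -/
def Good (p : Surjs n) (ε : Fin n → Fin n → Bool) (o : Surjs n) : Prop :=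
  o.Refines p.rev ∧ ∀ i j : Fin n, i < j → ε i j = o.sgn i j

variable {p : Surjs n} {ε : Fin n → Fin n → Bool} {o o' : Surjs n}

lemma Good.mono (hG : Good p ε o) {i j : Fin n} (h : bef o i j) :
    p.rev.f i ≤ p.rev.f j := hG.1 _ _ (bef_le h)

lemma Good.tie (hG : Good p ε o) {i j : Fin n} (h : o.f i = o.f j) :
    p.rev.f i = p.rev.f j :=
  le_antisymm (hG.1 _ _ h.le) (hG.1 _ _ h.ge)

lemma Good.sgn_iff (hG : Good p ε o) {i j : Fin n} (h : i < j) :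
    ε i j = true ↔ bef o j i := by
  rw [hG.2 i j h, Surjs.sgn]
  simp only [decide_eq_true_eq, bef]
  constructor
  · exact Or.inl
  · rintro (h1 | ⟨h1, h2⟩)
    · exact h1
    · exact absurd h2 (not_lt.mpr h.le)

lemma bef_iff_of_good (hG : Good p ε o) (hG' : Good p ε o') (i j : Fin n) :
    bef o i j ↔ bef o' i j := by
  have key : ∀ a b : Fin n, a < b → (bef o b a ↔ bef o' b a) := fun a b hab => by
    rw [← hG.sgn_iff hab, hG'.sgn_iff hab]
  rcases lt_trichotomy i j with h | h | h
  · constructor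
    · intro hb
      rcases bef_total (o := o') (bef_ne hb) with h' | h'
      · exact h'
      · exact absurd hb (bef_asymm ((key i j h).mpr h'))
    · intro hb
      rcases bef_total (o := o) (bef_ne hb) with h' | h'
      · exact h'
      · exact absurd hb (bef_asymm ((key i j h).mp h'))
  · subst h; simp [bef_irrefl]
  · exact key j i h
noncomputable def rnk (r : Fin n → Fin n → Prop) (i : Fin n) : ℕ :=
  (univ.filter fun j => r j i).card

section rnk
variable {r : Fin n → Fin n → Prop}

lemma rnk_lt (hirr : ∀ i, ¬ r i i) (i : Fin n) : rnk r i < n := by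
  have h1 : (univ.filter fun j => r j i) ⊆ univ.erase i := by
    intro j hj
    simp only [mem_filter] at hj
    exact mem_erase.mpr ⟨fun h => hirr i (h ▸ hj.2), mem_univ j⟩
  have h2 := card_le_card h1
  have h3 : (univ.erase i).card < univ.card := card_erase_lt_of_mem (mem_univ i)
  simpa [rnk] using lt_of_le_of_lt h2 h3

lemma rnk_lt_rnk (hirr : ∀ i, ¬ r i i) (htr : ∀ {a b c}, r a b → r b c → r a c)
    {i j : Fin n} (h : r i j) : rnk r i < rnk r j := by
  apply card_lt_card
  constructor
  · intro z hz
    simp only [mem_filter, mem_univ, true_and] at hz ⊢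
    exact htr hz h
  · intro hsub
    have := hsub (mem_filter.mpr ⟨mem_univ i, h⟩)
    simp only [mem_filter, mem_univ, true_and] at this
    exact hirr i this

lemma rnk_lt_rnk_iff (hirr : ∀ i, ¬ r i i) (htr : ∀ {a b c}, r a b → r b c → r a c)
    (htot : ∀ {a b : Fin n}, a ≠ b → r a b ∨ r b a) {i j : Fin n} :
    rnk r i < rnk r j ↔ r i j := by
  constructor
  · intro h
    by_contra hr
    rcases eq_or_ne i j with rfl | hne
    · exact lt_irrefl _ h
    · rcases htot hne with h' | h'
      · exact hr h'
      · exact absurd (rnk_lt_rnk hirr htr h') (not_lt.mpr h.le)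
  · exact rnk_lt_rnk hirr htr

lemma rnk_inj (hirr : ∀ i, ¬ r i i) (htr : ∀ {a b c}, r a b → r b c → r a c)
    (htot : ∀ {a b : Fin n}, a ≠ b → r a b ∨ r b a) {i j : Fin n}
    (h : rnk r i = rnk r j) : i = j := by
  by_contra hne
  rcases htot hne with h' | h'
  · exact absurd (rnk_lt_rnk hirr htr h') (by omega)
  · exact absurd (rnk_lt_rnk hirr htr h') (by omega)

lemma rnk_surj (hirr : ∀ i, ¬ r i i) (htr : ∀ {a b c}, r a b → r b c → r a c)
    (htot : ∀ {a b : Fin n}, a ≠ b → r a b ∨ r b a) {m : ℕ} (hm : m < n) :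
    ∃ i, rnk r i = m := by
  set e : Fin n → Fin n := fun i => ⟨rnk r i, rnk_lt hirr i⟩ with he
  have hinj : Injective e := fun a b hab =>
    rnk_inj hirr htr htot (by simpa [he, Fin.ext_iff] using hab)
  obtain ⟨i, hi⟩ := Finite.injective_iff_surjective.mp hinj ⟨m, hm⟩
  exact ⟨i, by simpa [he, Fin.ext_iff] using hi⟩

end rnk

section target
variable {p : Surjs n} {ε : Fin n → Fin n → Bool} {o : Surjs n}

/-- The strict linear order: sort by `p̄` value ascending, ties broken by *descending* index. -/
def Lrel (p : Surjs n) (i j : Fin n) : Prop :=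
  p.rev.f i < p.rev.f j ∨ (p.rev.f i = p.rev.f j ∧ j < i)

lemma Lrel_irrefl (p : Surjs n) : ∀ i, ¬ Lrel p i i := by simp [Lrel]

lemma Lrel_trans : ∀ {a b c : Fin n}, Lrel p a b → Lrel p b c → Lrel p a c := by
  rintro a b c (h1 | ⟨h1, h1'⟩) (h2 | ⟨h2, h2'⟩)
  · exact Or.inl (h1.trans h2)
  · exact Or.inl (h2 ▸ h1)
  · exact Or.inl (h1 ▸ h2)
  · exact Or.inr ⟨h1.trans h2, h2'.trans h1'⟩

lemma Lrel_total : ∀ {a b : Fin n}, a ≠ b → Lrel p a b ∨ Lrel p b a := by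
  intro a b h
  rcases lt_trichotomy (p.rev.f a) (p.rev.f b) with h1 | h1 | h1
  · exact Or.inl (Or.inl h1)
  · rcases lt_or_gt_of_ne h with h2 | h2
    · exact Or.inr (Or.inr ⟨h1.symm, h2⟩)
    · exact Or.inl (Or.inr ⟨h1, h2⟩)
  · exact Or.inr (Or.inl h1)

/-- The canonical surjection in the target case: a bijection. -/
noncomputable def osp (p : Surjs n) (hn : 1 ≤ n) : Surjs n :=
  ⟨⟨⟨n, Nat.lt_succ_self n⟩, fun i => ⟨rnk (Lrel p) i, rnk_lt (Lrel_irrefl p) i⟩⟩, by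
    rintro ⟨v, hv⟩
    obtain ⟨i, hi⟩ := rnk_surj (Lrel_irrefl p) Lrel_trans Lrel_total hv
    exact ⟨i, Fin.ext hi⟩⟩

lemma osp_k (hn : 1 ≤ n) : (osp p hn).k = n := rfl

lemma osp_lt_iff (hn : 1 ≤ n) {i j : Fin n} :
    (osp p hn).f i < (osp p hn).f j ↔ Lrel p i j := by
  rw [Fin.lt_def]
  exact rnk_lt_rnk_iff (Lrel_irrefl p) Lrel_trans Lrel_total

lemma osp_inj (hn : 1 ≤ n) : Injective (osp p hn).f := by
  intro a b hab
  exact rnk_inj (Lrel_irrefl p) Lrel_trans Lrel_total (congrArg Fin.val hab)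

lemma rev_le_rev_iff {a b : Fin n} {q : Surjs n} :
    q.rev.f a ≤ q.rev.f b ↔ q.f b ≤ q.f a := by
  show (q.f a).rev ≤ (q.f b).rev ↔ _
  exact Fin.rev_le_rev

lemma rev_lt_rev_iff {a b : Fin n} {q : Surjs n} :
    q.rev.f a < q.rev.f b ↔ q.f b < q.f a := by
  show (q.f a).rev < (q.f b).rev ↔ _
  exact Fin.rev_lt_rev

lemma rev_eq_rev_iff {a b : Fin n} {q : Surjs n} :
    q.rev.f a = q.rev.f b ↔ q.f a = q.f b := by
  constructor
  · intro h
    exact le_antisymm (rev_le_rev_iff.mp h.ge) (rev_le_rev_iff.mp h.le)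
  · intro h
    exact le_antisymm (rev_le_rev_iff.mpr h.ge) (rev_le_rev_iff.mpr h.le)

lemma osp_good (hn : 1 ≤ n)
    (htar : ∀ i j : Fin n, i < j → ε i j = decide (p.f i ≤ p.f j)) :
    Good p ε (osp p hn) := by
  constructor
  · intro x y hxy
    rcases eq_or_ne x y with rfl | hne
    · exact le_refl _
    · have : (osp p hn).f x < (osp p hn).f y :=
        lt_of_le_of_ne hxy (fun h => hne (osp_inj hn h))
    -- Lrel p x y means p̄ x < p̄ y or (= and y < x); in both cases p̄ x ≤ p̄ y
      rcases (osp_lt_iff hn).mp this with h | ⟨h, _⟩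
      · exact h.le
      · exact h.le
  · intro i j hij
    rw [htar i j hij, Surjs.sgn]
    congr 1
    rw [eq_iff_iff, osp_lt_iff hn]
    constructor
    · intro h
      rcases lt_or_eq_of_le h with h' | h'
      · exact Or.inl (rev_lt_rev_iff.mpr h')
      · exact Or.inr ⟨rev_eq_rev_iff.mpr h'.symm, hij⟩
    · rintro (h | ⟨h, _⟩)
      · exact (rev_lt_rev_iff.mp h).le
      · exact (rev_eq_rev_iff.mp h).ge

lemma good_inj (hG : Good p ε o)
    (htar : ∀ i j : Fin n, i < j → ε i j = decide (p.f i ≤ p.f j)) :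
    Injective o.f := by
  intro a b hab
  by_contra hne
  -- wlog a < b
  wlog hlt : a < b generalizing a b
  · exact this hab.symm (Ne.symm hne) (by omega)
  have h1 : ε a b = decide (p.f a ≤ p.f b) := htar a b hlt
  by_cases hp : p.f a ≤ p.f b
  · -- ε a b = true, so o.f b < o.f a, contradicting hab
    have : bef o b a := (hG.sgn_iff hlt).mp (by simp [h1, hp])
    rcases this with h | ⟨h, h'⟩
    · exact absurd hab (by omega)
    · omega
  · -- ε a b = false: hab gives p̄ a = p̄ b so p a = p b, contradiction
    have : p.rev.f a = p.rev.f b := hG.tie hab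
    exact hp (rev_eq_rev_iff.mp this).le

lemma good_k_eq (hG : Good p ε o)
    (htar : ∀ i j : Fin n, i < j → ε i j = decide (p.f i ≤ p.f j)) :
    o.k = n := by
  have h1 := k_le o
  have h2 : n ≤ o.k := by
    have := Fintype.card_le_of_injective o.f (good_inj hG htar)
    simpa using this
  omega

lemma val_eq_card_of_inj (hinj : Injective o.f) (i : Fin n) :
    (o.f i : ℕ) = (univ.filter fun j => bef o j i).card := by
  have hbij : ∀ j, bef o j i ↔ o.f j < o.f i := by
    intro j
    constructor
    · rintro (h | ⟨h, h'⟩)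
      · exact h
      · exact absurd (hinj h) (by omega)
    · exact Or.inl
  rw [show (univ.filter fun j => bef o j i) = univ.filter fun j => o.f j < o.f i by
    apply Finset.ext; intro j; simp [hbij]]
  have := Finset.card_bij (fun (j : Fin n) (hj : j ∈ univ.filter fun j => o.f j < o.f i)
      => o.f j)
    (fun j hj => by simp only [mem_filter, mem_univ, true_and] at hj ⊢
                    exact Finset.mem_Iio.mpr hj)
    (fun a ha b hb hab => hinj hab)
    (fun v hv => by
      obtain ⟨z, hz⟩ := o.2 v
      have hz' : o.f z = v := hz
      refine ⟨z, ?_, hz'⟩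
      simp only [mem_filter, mem_univ, true_and]
      rw [hz']
      exact Finset.mem_Iio.mp hv)
  rw [this, Fin.card_Iio]

lemma good_unique (hn : 1 ≤ n) (hG : Good p ε o)
    (htar : ∀ i j : Fin n, i < j → ε i j = decide (p.f i ≤ p.f j)) :
    o = osp p hn := by
  have hGo := osp_good (p := p) (ε := ε) hn htar
  apply Surjs_ext
  · rw [good_k_eq hG htar, osp_k]
  · intro i
    rw [val_eq_card_of_inj (good_inj hG htar) i,
        val_eq_card_of_inj (o := osp p hn) (osp_inj hn) i]
    congr 1
    apply Finset.ext
    intro j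
    simp only [mem_filter, mem_univ, true_and]
    exact bef_iff_of_good hG hGo j i

end target

section ops
variable {p : Surjs n} {ε : Fin n → Fin n → Bool} {o : Surjs n}

/-- Split the block of `x` right after `x`. -/
noncomputable def splitS (o : Surjs n) (x : Fin n)
    (hx : ∃ z, bef o x z ∧ o.f x = o.f z) : Surjs n :=
  have hkn : o.k < n := by
    have h1 := k_le o
    rcases Nat.lt_or_ge o.k n with h | h
    · exact h
    · exfalso
      have hkeq : o.k = n := le_antisymm h1 h
      have hbij : Function.Bijective o.f :=
        (Fintype.bijective_iff_surjective_and_card o.f).mpr ⟨o.2, by simp [hkeq]⟩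
      obtain ⟨z, hz1, hz2⟩ := hx
      exact bef_ne hz1 (hbij.1 hz2)
  ⟨⟨⟨o.k + 1, by omega⟩, fun z =>
      ⟨(o.f z : ℕ) + (if bef o x z then 1 else 0), by
        have := (o.f z).isLt
        show _ < o.k + 1
        split <;> omega⟩⟩, by
    rintro ⟨v, hv⟩
    have hv' : v < o.k + 1 := hv
    by_cases h1 : v ≤ (o.f x : ℕ)
    · rcases eq_or_lt_of_le h1 with he | hl
      · refine ⟨x, Fin.ext ?_⟩
        show (o.f x : ℕ) + (if bef o x x then 1 else 0) = v
        rw [if_neg (bef_irrefl o x), he]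
        omega
      · obtain ⟨z, hz⟩ := o.2 ⟨v, lt_trans hl (o.f x).isLt⟩
        have hz' : o.f z = ⟨v, lt_trans hl (o.f x).isLt⟩ := hz
        have hnb : ¬ bef o x z := by
          intro hb
          have := bef_le hb
          rw [hz'] at this
          have : (o.f x : ℕ) ≤ v := this
          omega
        refine ⟨z, Fin.ext ?_⟩
        show (o.f z : ℕ) + (if bef o x z then 1 else 0) = v
        rw [if_neg hnb, hz']
        simp
    · by_cases h2 : v = (o.f x : ℕ) + 1
      · obtain ⟨z, hz1, hz2⟩ := hx
        refine ⟨z, Fin.ext ?_⟩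
        show (o.f z : ℕ) + (if bef o x z then 1 else 0) = v
        rw [if_pos hz1, ← hz2, h2]
      · have hvk : v - 1 < o.k := by omega
        obtain ⟨z, hz⟩ := o.2 ⟨v - 1, hvk⟩
        have hz' : o.f z = ⟨v - 1, hvk⟩ := hz
        have hb : bef o x z := by
          left
          rw [hz', Fin.lt_def]
          show (o.f x : ℕ) < v - 1
          omega
        refine ⟨z, Fin.ext ?_⟩
        show (o.f z : ℕ) + (if bef o x z then 1 else 0) = v
        rw [if_pos hb, hz']
        show v - 1 + 1 = v
        omega⟩

lemma split_k (o : Surjs n) (x : Fin n) (hx : ∃ z, bef o x z ∧ o.f x = o.f z) :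
    (splitS o x hx).k = o.k + 1 := rfl

lemma split_f (o : Surjs n) (x : Fin n) (hx : ∃ z, bef o x z ∧ o.f x = o.f z) (z : Fin n) :
    ((splitS o x hx).f z : ℕ) = (o.f z : ℕ) + (if bef o x z then 1 else 0) := rfl

/-- Merge the block of `x` with the next block up. -/
noncomputable def mergeS (o : Surjs n) (x : Fin n)
    (hx : (o.f x : ℕ) + 1 < o.k) : Surjs n :=
  ⟨⟨⟨o.k - 1, by have := k_le o; omega⟩, fun z =>
      ⟨if (o.f x : ℕ) < (o.f z : ℕ) then (o.f z : ℕ) - 1 else (o.f z : ℕ), by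
        have := (o.f z).isLt
        show _ < o.k - 1
        split <;> omega⟩⟩, by
    rintro ⟨v, hv⟩
    have hv' : v < o.k - 1 := hv
    by_cases h1 : v ≤ (o.f x : ℕ)
    · obtain ⟨z, hz⟩ := o.2 (⟨v, by show v < o.k; omega⟩ : Fin o.k)
      have hz' : o.f z = ⟨v, by show v < o.k; omega⟩ := hz
      refine ⟨z, Fin.ext ?_⟩
      show (if (o.f x : ℕ) < (o.f z : ℕ) then (o.f z : ℕ) - 1 else (o.f z : ℕ)) = v
      rw [hz']
      show (if (o.f x : ℕ) < v then v - 1 else v) = v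
      rw [if_neg (by omega)]
    · obtain ⟨z, hz⟩ := o.2 (⟨v + 1, by show v + 1 < o.k; omega⟩ : Fin o.k)
      have hz' : o.f z = ⟨v + 1, by show v + 1 < o.k; omega⟩ := hz
      refine ⟨z, Fin.ext ?_⟩
      show (if (o.f x : ℕ) < (o.f z : ℕ) then (o.f z : ℕ) - 1 else (o.f z : ℕ)) = v
      rw [hz']
      show (if (o.f x : ℕ) < v + 1 then v + 1 - 1 else v + 1) = v
      rw [if_pos (by omega)]
      omega⟩

lemma merge_k (o : Surjs n) (x : Fin n) (hx : (o.f x : ℕ) + 1 < o.k) :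
    (mergeS o x hx).k = o.k - 1 := rfl

lemma merge_f (o : Surjs n) (x : Fin n) (hx : (o.f x : ℕ) + 1 < o.k) (z : Fin n) :
    ((mergeS o x hx).f z : ℕ) =
      if (o.f x : ℕ) < (o.f z : ℕ) then (o.f z : ℕ) - 1 else (o.f z : ℕ) := rfl

end ops

section pres
variable {p : Surjs n} {ε : Fin n → Fin n → Bool} {o : Surjs n} {x : Fin n}

lemma bef_rev_iff (o : Surjs n) {i j : Fin n} (h : i < j) :
    bef o j i ↔ o.f j < o.f i := by
  constructor
  · rintro (h' | ⟨h', h''⟩)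
    · exact h'
    · exact absurd h'' (by omega)
  · exact Or.inl

lemma bef_iff_of_forward {o o' : Surjs n} (h : ∀ i j, bef o i j → bef o' i j) (i j : Fin n) :
    bef o' i j ↔ bef o i j := by
  constructor
  · intro hb
    rcases eq_or_ne i j with rfl | hne
    · exact absurd hb (bef_irrefl o' i)
    · rcases bef_total (o := o) hne with h' | h'
      · exact h'
      · exact absurd hb (bef_asymm (h _ _ h'))
  · exact h i j

lemma good_congr {o' : Surjs n} (hG : Good p ε o)
    (hB : ∀ i j, bef o' i j ↔ bef o i j)
    (htie : ∀ i j : Fin n, o'.f i = o'.f j → p.rev.f i = p.rev.f j) :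
    Good p ε o' := by
  constructor
  · intro a b hab
    rcases eq_or_ne a b with rfl | hne
    · exact le_refl _
    · rcases bef_total (o := o') hne with h' | h'
      · exact hG.mono ((hB a b).mp h')
      · exact (htie a b (le_antisymm hab (bef_le h'))).le
  · intro i j hij
    rw [hG.2 i j hij, Surjs.sgn, Surjs.sgn]
    congr 1
    rw [eq_iff_iff, ← bef_rev_iff o hij, ← bef_rev_iff o' hij]
    exact (hB j i).symm

lemma split_bef (hx : ∃ z, bef o x z ∧ o.f x = o.f z) (i j : Fin n) :
    bef (splitS o x hx) i j ↔ bef o i j := by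
  apply bef_iff_of_forward
  clear i j
  intro i j hb
  have hvi := split_f o x hx i
  have hvj := split_f o x hx j
  rcases hb with h | ⟨h, h'⟩
  · have hn : (o.f i : ℕ) < (o.f j : ℕ) := h
    by_cases hbi : bef o x i
    · have hbj : bef o x j := bef_trans hbi (Or.inl h)
      rw [if_pos hbi] at hvi; rw [if_pos hbj] at hvj
      exact Or.inl (by rw [Fin.lt_def]; omega)
    · by_cases hbj : bef o x j
      · rw [if_neg hbi] at hvi; rw [if_pos hbj] at hvj
        exact Or.inl (by rw [Fin.lt_def]; omega)
      · rw [if_neg hbi] at hvi; rw [if_neg hbj] at hvj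
        exact Or.inl (by rw [Fin.lt_def]; omega)
  · have hn : (o.f i : ℕ) = (o.f j : ℕ) := congrArg Fin.val h
    by_cases hbi : bef o x i
    · have hbj : bef o x j := bef_trans hbi (Or.inr ⟨h, h'⟩)
      rw [if_pos hbi] at hvi; rw [if_pos hbj] at hvj
      exact Or.inr ⟨Fin.ext (by omega), h'⟩
    · by_cases hbj : bef o x j
      · rw [if_neg hbi] at hvi; rw [if_pos hbj] at hvj
        exact Or.inl (by rw [Fin.lt_def]; omega)
      · rw [if_neg hbi] at hvi; rw [if_neg hbj] at hvj
        exact Or.inr ⟨Fin.ext (by omega), h'⟩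

lemma split_tie (hx : ∃ z, bef o x z ∧ o.f x = o.f z) {i j : Fin n}
    (h : (splitS o x hx).f i = (splitS o x hx).f j) : o.f i = o.f j := by
  have hv := congrArg Fin.val h
  rw [split_f, split_f] at hv
  by_cases hbi : bef o x i <;> by_cases hbj : bef o x j
  · rw [if_pos hbi, if_pos hbj] at hv; exact Fin.ext (by omega)
  · rw [if_pos hbi, if_neg hbj] at hv
    exfalso
    have : bef o i j := Or.inl (by rw [Fin.lt_def]; omega)
    exact hbj (bef_trans hbi this)
  · rw [if_neg hbi, if_pos hbj] at hv
    exfalso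
    have : bef o j i := Or.inl (by rw [Fin.lt_def]; omega)
    exact hbi (bef_trans hbj this)
  · rw [if_neg hbi, if_neg hbj] at hv; exact Fin.ext (by omega)

lemma split_good (hG : Good p ε o) (hx : ∃ z, bef o x z ∧ o.f x = o.f z) :
    Good p ε (splitS o x hx) :=
  good_congr hG (split_bef hx) (fun i j h => hG.tie (split_tie hx h))

lemma merge_bef (hmax : ∀ z, o.f z = o.f x → z ≤ x)
    (hmin : ∀ z, (o.f z : ℕ) = (o.f x : ℕ) + 1 → x < z)
    (hx : (o.f x : ℕ) + 1 < o.k) (i j : Fin n) :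
    bef (mergeS o x hx) i j ↔ bef o i j := by
  apply bef_iff_of_forward
  clear i j
  intro i j hb
  have hvi := merge_f o x hx i
  have hvj := merge_f o x hx j
  rcases hb with h | ⟨h, h'⟩
  · have hn : (o.f i : ℕ) < (o.f j : ℕ) := h
    by_cases h1 : (o.f i : ℕ) = (o.f x : ℕ) ∧ (o.f j : ℕ) = (o.f x : ℕ) + 1
    · right
      refine ⟨Fin.ext ?_, ?_⟩
      · rw [hvi, hvj, if_neg (by omega), if_pos (by omega)]
        omega
      · have h2 : i ≤ x := hmax i (Fin.ext h1.1)
        have h3 : x < j := hmin j h1.2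
        exact lt_of_le_of_lt h2 h3
    · left
      rw [Fin.lt_def, hvi, hvj]
      by_cases hci : (o.f x : ℕ) < (o.f i : ℕ) <;>
        by_cases hcj : (o.f x : ℕ) < (o.f j : ℕ) <;>
        simp only [if_pos, if_neg, hci, hcj, if_true, if_false] <;> omega
  · have hn : (o.f i : ℕ) = (o.f j : ℕ) := congrArg Fin.val h
    right
    refine ⟨Fin.ext ?_, h'⟩
    rw [hvi, hvj, hn]

lemma merge_disj (hx : (o.f x : ℕ) + 1 < o.k) {i j : Fin n}
    (h : (mergeS o x hx).f i = (mergeS o x hx).f j) :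
    (o.f i : ℕ) = (o.f j : ℕ) ∨
      ((o.f i : ℕ) = (o.f x : ℕ) ∧ (o.f j : ℕ) = (o.f x : ℕ) + 1) ∨
      ((o.f j : ℕ) = (o.f x : ℕ) ∧ (o.f i : ℕ) = (o.f x : ℕ) + 1) := by
  have hv := congrArg Fin.val h
  rw [merge_f, merge_f] at hv
  by_cases hci : (o.f x : ℕ) < (o.f i : ℕ) <;>
    by_cases hcj : (o.f x : ℕ) < (o.f j : ℕ) <;>
    simp only [if_pos, if_neg, hci, hcj, if_true, if_false] at hv <;> omega

lemma merge_good (hmax : ∀ z, o.f z = o.f x → z ≤ x)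
    (hmin : ∀ z, (o.f z : ℕ) = (o.f x : ℕ) + 1 → x < z)
    (hG : Good p ε o) (hx : (o.f x : ℕ) + 1 < o.k)
    (hpx : ∀ z, (o.f z : ℕ) = (o.f x : ℕ) + 1 → p.rev.f z = p.rev.f x) :
    Good p ε (mergeS o x hx) := by
  apply good_congr hG (merge_bef hmax hmin hx)
  intro i j h
  rcases merge_disj hx h with h1 | ⟨h1, h2⟩ | ⟨h1, h2⟩
  · exact hG.tie (Fin.ext h1)
  · rw [hG.tie (Fin.ext h1 : o.f i = o.f x), hpx j h2]
  · rw [hG.tie (Fin.ext h1 : o.f j = o.f x), hpx i h2]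

end pres

section sel
variable {p : Surjs n} {ε : Fin n → Fin n → Bool} {o : Surjs n}

def adjP (o : Surjs n) (x y : Fin n) : Prop :=
  bef o x y ∧ ∀ z, ¬(bef o x z ∧ bef o z y)

noncomputable def Cadj (p o : Surjs n) : Finset (Fin n) :=
  univ.filter fun x => ∃ y, adjP o x y ∧ x < y ∧ p.rev.f x = p.rev.f y

lemma adjP_unique {x y y' : Fin n} (h1 : adjP o x y) (h2 : adjP o x y') : y = y' := by
  by_contra hne
  rcases bef_total (o := o) hne with h | h
  · exact h2.2 y ⟨h1.1, h⟩
  · exact h1.2 y' ⟨h2.1, h⟩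

noncomputable def xsel (p o : Surjs n) (h : (Cadj p o).Nonempty) : Fin n :=
  (Cadj p o).min' h

lemma xsel_mem (h : (Cadj p o).Nonempty) : xsel p o h ∈ Cadj p o := Finset.min'_mem _ _

noncomputable def ysel (p o : Surjs n) (h : (Cadj p o).Nonempty) : Fin n :=
  (univ.filter fun y => adjP o (xsel p o h) y).min' (by
    have hm := xsel_mem h
    rw [Cadj, mem_filter] at hm
    obtain ⟨-, y, hy, -⟩ := hm
    exact ⟨y, mem_filter.mpr ⟨mem_univ _, hy⟩⟩)

lemma ysel_spec (h : (Cadj p o).Nonempty) :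
    adjP o (xsel p o h) (ysel p o h) ∧ xsel p o h < ysel p o h ∧
      p.rev.f (xsel p o h) = p.rev.f (ysel p o h) := by
  have hm := xsel_mem (p := p) (o := o) h
  rw [Cadj, mem_filter] at hm
  obtain ⟨-, y0, hy0, hlt, hp⟩ := hm
  have hym : ysel p o h ∈ univ.filter fun y => adjP o (xsel p o h) y := Finset.min'_mem _ _
  rw [mem_filter] at hym
  have heq : ysel p o h = y0 := adjP_unique hym.2 hy0
  exact ⟨hym.2, heq ▸ hlt, heq ▸ hp⟩

lemma adjP_succ {x y : Fin n} (ha : adjP o x y) (hne : o.f x ≠ o.f y) :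
    (o.f y : ℕ) = (o.f x : ℕ) + 1 := by
  have h1 : (o.f x : ℕ) < (o.f y : ℕ) := by
    rcases ha.1 with h | ⟨h, _⟩
    · exact h
    · exact absurd h hne
  by_contra h
  have h2 : (o.f x : ℕ) + 1 < (o.f y : ℕ) := by omega
  have hlt : (o.f x : ℕ) + 1 < o.k := lt_trans h2 (o.f y).isLt
  obtain ⟨z, hz⟩ := o.2 (⟨(o.f x : ℕ) + 1, hlt⟩ : Fin o.k)
  have hz' : (o.f z : ℕ) = (o.f x : ℕ) + 1 := congrArg Fin.val hz
  refine ha.2 z ⟨Or.inl ?_, Or.inl ?_⟩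
  · rw [Fin.lt_def]; omega
  · rw [Fin.lt_def]; omega

section selfacts
variable (hC : (Cadj p o).Nonempty)

lemma sel_bound (hne : o.f (xsel p o hC) ≠ o.f (ysel p o hC)) : (o.f (xsel p o hC) : ℕ) + 1 < o.k := by
  have h1 := adjP_succ (ysel_spec hC).1 hne
  have h2 := (o.f (ysel p o hC)).isLt
  omega

lemma sel_hmax (hne : o.f (xsel p o hC) ≠ o.f (ysel p o hC)) : ∀ z, o.f z = o.f (xsel p o hC) → z ≤ xsel p o hC := by
  intro z hz
  by_contra h
  have hlt : xsel p o hC < z := by omega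
  have h1 := adjP_succ (ysel_spec hC).1 hne
  refine (ysel_spec hC).1.2 z ⟨Or.inr ⟨hz.symm, hlt⟩, Or.inl ?_⟩
  rw [Fin.lt_def, hz]
  omega

lemma sel_hmin (hne : o.f (xsel p o hC) ≠ o.f (ysel p o hC)) : ∀ z, (o.f z : ℕ) = (o.f (xsel p o hC) : ℕ) + 1 → xsel p o hC < z := by
  intro z hz
  have h1 := adjP_succ (ysel_spec hC).1 hne
  rcases eq_or_ne z (ysel p o hC) with rfl | hzy
  · exact (ysel_spec hC).2.1
  · have htie : o.f z = o.f (ysel p o hC) := Fin.ext (by omega)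
    have hbxz : bef o (xsel p o hC) z := Or.inl (by rw [Fin.lt_def]; omega)
    have hnzy : ¬ bef o z (ysel p o hC) := fun hb => (ysel_spec hC).1.2 z ⟨hbxz, hb⟩
    rcases bef_total (o := o) hzy with h | h
    · exact absurd h hnzy
    · rcases h with h | ⟨h, h'⟩
      · exact absurd h (by rw [Fin.lt_def]; omega)
      · exact lt_trans (ysel_spec hC).2.1 h'

lemma sel_hpx (hne : o.f (xsel p o hC) ≠ o.f (ysel p o hC)) (hG : Good p ε o) :
    ∀ z, (o.f z : ℕ) = (o.f (xsel p o hC) : ℕ) + 1 →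
      p.rev.f z = p.rev.f (xsel p o hC) := by
  intro z hz
  have h1 := adjP_succ (ysel_spec hC).1 hne
  have htie : o.f z = o.f (ysel p o hC) := Fin.ext (by omega)
  rw [hG.tie htie, ((ysel_spec hC).2.2).symm]

end selfacts

/-- The involution. -/
noncomputable def toggle (p : Surjs n) (ε : Fin n → Fin n → Bool) (o : Surjs n) : Surjs n :=
  if h : Good p ε o ∧ (Cadj p o).Nonempty then
    if htie : o.f (xsel p o h.2) = o.f (ysel p o h.2) then
      splitS o (xsel p o h.2) ⟨ysel p o h.2, (ysel_spec h.2).1.1, htie⟩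
    else
      mergeS o (xsel p o h.2) (sel_bound h.2 htie)
  else o

lemma toggle_eq_split (hG : Good p ε o) (hC : (Cadj p o).Nonempty)
    (htie : o.f (xsel p o hC) = o.f (ysel p o hC)) :
    toggle p ε o = splitS o (xsel p o hC) ⟨ysel p o hC, (ysel_spec hC).1.1, htie⟩ := by
  rw [toggle, dif_pos ⟨hG, hC⟩, dif_pos htie]

lemma toggle_eq_merge (hG : Good p ε o) (hC : (Cadj p o).Nonempty)
    (htie : ¬ o.f (xsel p o hC) = o.f (ysel p o hC))
    (hb : (o.f (xsel p o hC) : ℕ) + 1 < o.k) :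
    toggle p ε o = mergeS o (xsel p o hC) hb := by
  rw [toggle, dif_pos ⟨hG, hC⟩, dif_neg htie]

end sel

section toggles
variable {p : Surjs n} {ε : Fin n → Fin n → Bool} {o : Surjs n}

lemma toggle_bef (hG : Good p ε o) (hC : (Cadj p o).Nonempty) (i j : Fin n) :
    bef (toggle p ε o) i j ↔ bef o i j := by
  by_cases htie : o.f (xsel p o hC) = o.f (ysel p o hC)
  · rw [toggle_eq_split hG hC htie]; exact split_bef _ i j
  · rw [toggle_eq_merge hG hC htie (sel_bound hC htie)]
    exact merge_bef (sel_hmax hC htie) (sel_hmin hC htie) _ i j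

lemma toggle_good (hG : Good p ε o) (hC : (Cadj p o).Nonempty) :
    Good p ε (toggle p ε o) := by
  by_cases htie : o.f (xsel p o hC) = o.f (ysel p o hC)
  · rw [toggle_eq_split hG hC htie]; exact split_good hG _
  · rw [toggle_eq_merge hG hC htie (sel_bound hC htie)]
    exact merge_good (sel_hmax hC htie) (sel_hmin hC htie) hG _ (sel_hpx hC htie hG)

lemma toggle_k (hG : Good p ε o) (hC : (Cadj p o).Nonempty) :
    (toggle p ε o).k = o.k + 1 ∨ o.k = (toggle p ε o).k + 1 := by
  by_cases htie : o.f (xsel p o hC) = o.f (ysel p o hC)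
  · rw [toggle_eq_split hG hC htie]; exact Or.inl (split_k _ _ _)
  · rw [toggle_eq_merge hG hC htie (sel_bound hC htie)]
    right
    rw [merge_k]
    have := sel_bound hC htie
    omega

lemma adjP_congr {o' : Surjs n} (hB : ∀ i j, bef o' i j ↔ bef o i j) {a b : Fin n} :
    adjP o' a b ↔ adjP o a b := by
  unfold adjP
  constructor
  · rintro ⟨h1, h2⟩
    exact ⟨(hB a b).mp h1, fun z hz => h2 z ⟨(hB a z).mpr hz.1, (hB z b).mpr hz.2⟩⟩
  · rintro ⟨h1, h2⟩
    exact ⟨(hB a b).mpr h1, fun z hz => h2 z ⟨(hB a z).mp hz.1, (hB z b).mp hz.2⟩⟩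

lemma cadj_congr {o' : Surjs n} (hB : ∀ i j, bef o' i j ↔ bef o i j) :
    Cadj p o' = Cadj p o := by
  apply Finset.ext
  intro a
  rw [Cadj, Cadj, mem_filter, mem_filter]
  constructor
  · rintro ⟨-, y, h1, h2⟩
    exact ⟨mem_univ a, y, (adjP_congr hB).mp h1, h2⟩
  · rintro ⟨-, y, h1, h2⟩
    exact ⟨mem_univ a, y, (adjP_congr hB).mpr h1, h2⟩

lemma min'_eq {α : Type*} [LinearOrder α] {s t : Finset α} (hst : s = t)
    (hs : s.Nonempty) (ht : t.Nonempty) : s.min' hs = t.min' ht := by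
  subst hst; rfl

lemma xsel_congr {o' : Surjs n} (hB : ∀ i j, bef o' i j ↔ bef o i j)
    (hC' : (Cadj p o').Nonempty) (hC : (Cadj p o).Nonempty) :
    xsel p o' hC' = xsel p o hC :=
  min'_eq (cadj_congr hB) _ _

lemma ysel_congr {o' : Surjs n} (hB : ∀ i j, bef o' i j ↔ bef o i j)
    (hC' : (Cadj p o').Nonempty) (hC : (Cadj p o).Nonempty) :
    ysel p o' hC' = ysel p o hC := by
  apply min'_eq
  rw [xsel_congr hB hC' hC]
  apply Finset.ext
  intro a
  rw [mem_filter, mem_filter]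
  constructor
  · rintro ⟨-, h1⟩
    exact ⟨mem_univ a, (adjP_congr hB).mp h1⟩
  · rintro ⟨-, h1⟩
    exact ⟨mem_univ a, (adjP_congr hB).mpr h1⟩

lemma toggle_toggle (hG : Good p ε o) (hC : (Cadj p o).Nonempty) :
    toggle p ε (toggle p ε o) = o := by
  set o' := toggle p ε o with ho'
  have hB : ∀ i j, bef o' i j ↔ bef o i j := toggle_bef hG hC
  have hG' : Good p ε o' := toggle_good hG hC
  have hC' : (Cadj p o').Nonempty := by rw [cadj_congr hB]; exact hC
  have hx : xsel p o' hC' = xsel p o hC := xsel_congr hB hC' hC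
  have hy : ysel p o' hC' = ysel p o hC := ysel_congr hB hC' hC
  set x := xsel p o hC with hxd
  set y := ysel p o hC with hyd
  have hadj : adjP o x y := (ysel_spec hC).1
  by_cases htie : o.f x = o.f y
  · -- o' is a split; toggle o' is a merge back
    have hsplit : o' = splitS o x ⟨y, hadj.1, htie⟩ := toggle_eq_split hG hC htie
    have hvx : (o'.f x : ℕ) = (o.f x : ℕ) := by
      rw [hsplit, split_f, if_neg (bef_irrefl o x)]
      omega
    have hvy : (o'.f y : ℕ) = (o.f y : ℕ) + 1 := by
      rw [hsplit, split_f, if_pos hadj.1]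
    have hne' : ¬ o'.f (xsel p o' hC') = o'.f (ysel p o' hC') := by
      rw [hx, hy]
      intro h
      have := congrArg Fin.val h
      omega
    rw [toggle_eq_merge hG' hC' hne' (sel_bound hC' hne')]
    apply Surjs_ext
    · rw [merge_k, hsplit, split_k]
      omega
    · intro z
      rw [merge_f, hx]
      have hvz : (o'.f z : ℕ) = (o.f z : ℕ) + (if bef o x z then 1 else 0) := by
        rw [hsplit]; exact split_f o x ⟨y, hadj.1, htie⟩ z
      by_cases hbz : bef o x z
      · rw [if_pos (by rw [hvx, hvz, if_pos hbz]; have := bef_le hbz; omega)]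
        rw [hvz, if_pos hbz]
        omega
      · rw [if_neg (by rw [hvx, hvz, if_neg hbz]
                       intro h
                       exact hbz (Or.inl (by rw [Fin.lt_def]; omega)))]
        rw [hvz, if_neg hbz]
        omega
  · -- o' is a merge; toggle o' is a split back
    have hb := sel_bound hC htie
    have hmerge : o' = mergeS o x hb := toggle_eq_merge hG hC htie hb
    have hsuc : (o.f y : ℕ) = (o.f x : ℕ) + 1 := adjP_succ hadj htie
    have hvx : (o'.f x : ℕ) = (o.f x : ℕ) := by
      rw [hmerge, merge_f, if_neg (by omega)]
    have hvy : (o'.f y : ℕ) = (o.f x : ℕ) := by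
      rw [hmerge, merge_f, if_pos (by omega)]
      omega
    have htie' : o'.f (xsel p o' hC') = o'.f (ysel p o' hC') := by
      rw [hx, hy]
      exact Fin.ext (by omega)
    rw [toggle_eq_split hG' hC' htie']
    apply Surjs_ext
    · rw [split_k, hmerge, merge_k]
      omega
    · intro z
      rw [split_f]
      have hvz : (o'.f z : ℕ) =
          if (o.f x : ℕ) < (o.f z : ℕ) then (o.f z : ℕ) - 1 else (o.f z : ℕ) := by
        rw [hmerge]; exact merge_f o x hb z
      rw [hx]
      have hbiff : bef o' x z ↔ bef o x z := hB x z
      by_cases hbz : bef o x z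
      · rw [if_pos (hbiff.mpr hbz)]
        rcases hbz with h | ⟨h, h'⟩
        · have hlt : (o.f x : ℕ) < (o.f z : ℕ) := h
          rw [hvz, if_pos hlt]
          omega
        · exact absurd (sel_hmax hC htie z h.symm) (by omega)
      · rw [if_neg (by rw [hbiff]; exact hbz)]
        have : ¬ (o.f x : ℕ) < (o.f z : ℕ) := fun h => hbz (Or.inl (by rw [Fin.lt_def]; omega))
        rw [hvz, if_neg this]
        omega

lemma toggle_ne (hG : Good p ε o) (hC : (Cadj p o).Nonempty) :
    toggle p ε o ≠ o := by
  intro h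
  have := congrArg Surjs.k h
  rcases toggle_k hG hC with h' | h' <;> omega

lemma toggle_of_not (h : ¬ Good p ε o) : toggle p ε o = o := by
  rw [toggle, dif_neg (fun hh => h hh.1)]

end toggles

section exist
variable {p : Surjs n} {ε : Fin n → Fin n → Bool} {o : Surjs n}

lemma cadj_nonempty (hG : Good p ε o)
    (hnt : ¬ ∀ i j : Fin n, i < j → ε i j = decide (p.f i ≤ p.f j)) :
    (Cadj p o).Nonempty := by
  -- Step 1: produce a pair x < y with bef o x y and equal p̄-values
  have step1 : ∃ x y : Fin n, bef o x y ∧ x < y ∧ p.rev.f x = p.rev.f y := by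
    push_neg at hnt
    obtain ⟨i, j, hij, hne⟩ := hnt
    by_cases hp : p.f i ≤ p.f j
    · have hεf : ε i j = false := by
        have : decide (p.f i ≤ p.f j) = true := decide_eq_true hp
        cases hεv : ε i j
        · rfl
        · exact absurd (hεv.trans this.symm) hne
      have hnb : ¬ bef o j i := fun hb => by
        have := (hG.sgn_iff hij).mpr hb
        rw [hεf] at this
        exact Bool.false_ne_true this
      have hb : bef o i j := by
        rcases bef_total (o := o) (ne_of_lt hij) with h | h
        · exact h
        · exact absurd h hnb
      refine ⟨i, j, hb, hij, le_antisymm (hG.mono hb) (rev_le_rev_iff.mpr hp)⟩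
    · exfalso
      have hεt : ε i j = true := by
        have : decide (p.f i ≤ p.f j) = false := decide_eq_false hp
        cases hεv : ε i j
        · exact absurd (hεv.trans this.symm) hne
        · rfl
      have hb : bef o j i := (hG.sgn_iff hij).mp hεt
      have h1 : p.rev.f j ≤ p.rev.f i := hG.mono hb
      have h2 : p.f j < p.f i := lt_of_not_ge hp
      have h3 : p.rev.f i < p.rev.f j := rev_lt_rev_iff.mpr h2
      exact absurd h1 (not_le.mpr h3)
  -- Step 2: shrink to an adjacent pair by induction on the rank gap
  have hirr : ∀ i, ¬ bef o i i := bef_irrefl o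
  have htr : ∀ {a b c : Fin n}, bef o a b → bef o b c → bef o a c :=
    fun h1 h2 => bef_trans h1 h2
  have key : ∀ g : ℕ, ∀ x y : Fin n,
      rnk (bef o) y ≤ rnk (bef o) x + g → bef o x y → x < y →
      p.rev.f x = p.rev.f y → (Cadj p o).Nonempty := by
    intro g
    induction g with
    | zero =>
      intro x y hg hb _ _
      have := rnk_lt_rnk hirr htr hb
      omega
    | succ g ih =>
      intro x y hg hb hxy hp
      by_cases hadj : ∀ z, ¬(bef o x z ∧ bef o z y)
      · exact ⟨x, by rw [Cadj, mem_filter]; exact ⟨mem_univ x, y, ⟨hb, hadj⟩, hxy, hp⟩⟩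
      · push_neg at hadj
        obtain ⟨z, hz1, hz2⟩ := hadj
        have hpz1 : p.rev.f x ≤ p.rev.f z := hG.mono hz1
        have hpz2 : p.rev.f z ≤ p.rev.f y := hG.mono hz2
        have hrx := rnk_lt_rnk hirr htr hz1
        have hry := rnk_lt_rnk hirr htr hz2
        rcases lt_trichotomy x z with h' | h' | h'
        · exact ih x z (by omega) hz1 h' (le_antisymm hpz1 (hp ▸ hpz2))
        · exact absurd hz1 (h' ▸ bef_irrefl o x)
        · exact ih z y (by omega) hz2 (h'.trans hxy) (le_antisymm hpz2 (hp ▸ hpz1))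
  obtain ⟨x, y, hb, hxy, hp⟩ := step1
  exact key (rnk (bef o) y) x y (by omega) hb hxy hp

lemma sign_cancel (a b : ℕ) (h : a = b + 1) :
    (-1 : ℚ) ^ ((a : ℤ) - (n : ℤ)) + (-1 : ℚ) ^ ((b : ℤ) - (n : ℤ)) = 0 := by
  subst h
  have : ((b + 1 : ℕ) : ℤ) - (n : ℤ) = ((b : ℤ) - (n : ℤ)) + 1 := by push_cast; ring
  rw [this, zpow_add₀ (by norm_num : (-1 : ℚ) ≠ 0), zpow_one]
  ring

end exist

end SurjsPf

open SurjsPf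

/-- Coefficientwise form of `X(p)⁻¹ = Σ_{o refines p̄} (−1)^{k(o)−n} X(o)`. -/
theorem reverse_monomial_as_alternating_sum (n : ℕ) (hn : 1 ≤ n) (p : Surjs n)
    (ε : Fin n → Fin n → Bool) :
    (∑ o : Surjs n,
        if o.Refines p.rev ∧ (∀ i j : Fin n, i < j → ε i j = o.sgn i j) then
          ((-1 : ℚ) ^ ((o.k : ℤ) - (n : ℤ))) else 0) =
      if ∀ i j : Fin n, i < j → ε i j = decide (p.f i ≤ p.f j) then 1 else 0 := by
  by_cases htar : ∀ i j : Fin n, i < j → ε i j = decide (p.f i ≤ p.f j)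
  · rw [if_pos htar]
    rw [Finset.sum_eq_single_of_mem (osp p hn) (Finset.mem_univ _)]
    · rw [if_pos]
      · rw [osp_k hn, sub_self, zpow_zero]
      · exact osp_good hn htar
    · intro b _ hbne
      rw [if_neg]
      intro hGb
      exact hbne (good_unique hn hGb htar)
  · rw [if_neg htar]
    have hrw : ∀ o : Surjs n,
        (if o.Refines p.rev ∧ (∀ i j : Fin n, i < j → ε i j = o.sgn i j) then
          ((-1 : ℚ) ^ ((o.k : ℤ) - (n : ℤ))) else 0) =
        (if Good p ε o then ((-1 : ℚ) ^ ((o.k : ℤ) - (n : ℤ))) else 0) := fun o => if_congr Iff.rfl rfl rfl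
    simp only [hrw]
    apply Finset.sum_ninvolution (g := fun o => toggle p ε o)
    · intro a
      by_cases hGa : Good p ε a
      · have hCa := cadj_nonempty hGa htar
        have hG' := toggle_good hGa hCa
        rw [if_pos hGa, if_pos hG']
        rcases toggle_k hGa hCa with h | h
        · rw [add_comm]
          exact sign_cancel _ _ h
        · exact sign_cancel _ _ h
      · rw [toggle_of_not hGa, if_neg hGa]
        norm_num
    · intro a ha
      have hGa : Good p ε a := by
        by_contra h
        rw [if_neg h] at ha
        exact ha rfl
      exact toggle_ne hGa (cadj_nonempty hGa htar)
    · intro a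
      exact Finset.mem_univ _
    · intro a
      by_cases hGa : Good p ε a
      · exact toggle_toggle hGa (cadj_nonempty hGa htar)
      · rw [toggle_of_not hGa, toggle_of_not hGa]
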